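/- For every integer n ≥ 4, any two distinct vertices u and v of CW_n have at most 3 common neighbors, i.e. |CN_{CW_n}(u, v)| ≤ 3. -/

import Mathlib

/-- The generating set S₂ = {(1 j) : 2 ≤ j ≤ n} ∪ {(j j+1) : 2 ≤ j ≤ n−1} ∪ {(2 n)},
where elements of {1,…,n} are encoded zero-indexed as `Fin n` (value k represents k+1). -/
def cwGen (n : ℕ) : Set (Equiv.Perm (Fin n)) :=
  {s | ∃ i j : Fin n, s = Equiv.swap i j ∧
      (((i : ℕ) = 0 ∧ j ≠ i) ∨
       ((j : ℕ) = (i : ℕ) + 1 ∧ 1 ≤ (i : ℕ)) ∨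
       ((i : ℕ) = 1 ∧ (j : ℕ) = n - 1))}

/-- The Cayley graph CW_n = Cay(S_n, S₂). -/
def CW (n : ℕ) : SimpleGraph (Equiv.Perm (Fin n)) where
  Adj g h := g ≠ h ∧ g⁻¹ * h ∈ cwGen n
  symm := by
    refine ⟨?_⟩
    rintro g h ⟨hne, i, j, hs, hc⟩
    refine ⟨hne.symm, i, j, ?_, hc⟩
    have hinv : h⁻¹ * g = (g⁻¹ * h)⁻¹ := by group
    rw [hinv, hs, Equiv.swap_inv]
  loopless := ⟨fun g h => h.1 rfl⟩


open Equiv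

section aux
variable {α : Type*} [DecidableEq α]

lemma aux_swap_of_apply {t : Perm α} {x y : α} (ht : t.IsSwap) (h : t y = x) (hne : y ≠ x) :
    t = Equiv.swap x y := by
  obtain ⟨c, d, hcd, rfl⟩ := ht
  rcases eq_or_ne y c with rfl | h1
  · rw [Equiv.swap_apply_left] at h
    subst h; exact Equiv.swap_comm _ _
  rcases eq_or_ne y d with rfl | h2
  · rw [Equiv.swap_apply_right] at h
    subst h; rfl
  · rw [Equiv.swap_apply_of_ne_of_ne h1 h2] at h
    exact absurd h hne

lemma aux_invol {s : Perm α} (hs : Perm.IsSwap s) (x : α) : s (s x) = x := by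
  obtain ⟨c, d, hcd, rfl⟩ := hs
  exact Equiv.swap_apply_self _ _ _

lemma aux_supp {g s : Perm α} (hg : g ≠ 1) (hs : s.IsSwap) (hgs : (g * s).IsSwap)
    {x : α} (hx : s x ≠ x) : g x ≠ x := by
  intro hgx
  have h1 : (g * s) (s x) = x := by rw [Perm.mul_apply, aux_invol hs, hgx]
  have ht : g * s = Equiv.swap x (s x) := aux_swap_of_apply hgs h1 hx
  have hs' : s = Equiv.swap (s x) x := aux_swap_of_apply hs rfl (Ne.symm hx)
  apply hg
  have hginv : g = (g * s) * s⁻¹ := by group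
  rw [ht] at hginv
  nth_rewrite 2 [hs'] at hginv
  rw [Equiv.swap_inv, Equiv.swap_comm (s x) x, Equiv.swap_mul_self] at hginv
  exact hginv

lemma aux_excl {g : Perm α} {x y : α} (hxy : x ≠ y)
    (h1 : g y ≠ x) (h2 : g y ≠ y) (h3 : g (g y) = y) :
    ¬ (g * Equiv.swap x y).IsSwap := by
  intro ht
  have hinv := aux_invol ht x
  have e1 : (g * Equiv.swap x y) x = g y := by
    rw [Perm.mul_apply, Equiv.swap_apply_left]
  have e2 : (g * Equiv.swap x y) (g y) = y := by
    rw [Perm.mul_apply, Equiv.swap_apply_of_ne_of_ne h1 h2, h3]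
  rw [e1, e2] at hinv
  exact hxy hinv.symm

lemma aux_swap_mem_three {x y p q r : α}
    (hx : x = p ∨ x = q ∨ x = r) (hy : y = p ∨ y = q ∨ y = r) (hxy : x ≠ y) :
    Equiv.swap x y = Equiv.swap p q ∨ Equiv.swap x y = Equiv.swap p r ∨
      Equiv.swap x y = Equiv.swap q r := by
  rcases hx with rfl | rfl | rfl <;> rcases hy with rfl | rfl | rfl <;>
    first
      | exact absurd rfl hxy
      | exact Or.inl rfl
      | exact Or.inl (Equiv.swap_comm _ _)
      | exact Or.inr (Or.inl rfl)
      | exact Or.inr (Or.inl (Equiv.swap_comm _ _))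
      | exact Or.inr (Or.inr rfl)
      | exact Or.inr (Or.inr (Equiv.swap_comm _ _))

lemma aux_three {g : Perm α} {p q r : α} (hpq : p ≠ q) (hpr : p ≠ r) (hqr : q ≠ r)
    (hgf : g = Equiv.swap p q * Equiv.swap p r) :
    {s : Perm α | s.IsSwap ∧ (g * s).IsSwap} ⊆
      {Equiv.swap p q, Equiv.swap p r, Equiv.swap q r} := by
  have hgr : g r = q := by
    rw [hgf, Perm.mul_apply, Equiv.swap_apply_right, Equiv.swap_apply_left]
  have hg1 : g ≠ 1 := by
    intro h; rw [h] at hgr; exact hqr (by simpa using hgr.symm)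
  rintro s ⟨hs, hgs⟩
  obtain ⟨x, y, hxy, rfl⟩ := hs
  have hmem : ∀ z, Equiv.swap x y z ≠ z → (z = p ∨ z = q ∨ z = r) := by
    intro z hz
    by_contra hcon
    push_neg at hcon
    obtain ⟨h1, h2, h3⟩ := hcon
    have hz2 : g z = z := by
      rw [hgf, Perm.mul_apply, Equiv.swap_apply_of_ne_of_ne h1 h3,
        Equiv.swap_apply_of_ne_of_ne h1 h2]
    exact aux_supp hg1 ⟨x, y, hxy, rfl⟩ hgs hz hz2
  have hx := hmem x (by rw [Equiv.swap_apply_left]; exact Ne.symm hxy)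
  have hy := hmem y (by rw [Equiv.swap_apply_right]; exact hxy)
  rcases aux_swap_mem_three hx hy hxy with h | h | h <;> simp [h]

lemma aux_four {g : Perm α} {a b c d : α} (hab : a ≠ b) (hcd : c ≠ d)
    (hac : a ≠ c) (had : a ≠ d) (hbc : b ≠ c) (hbd : b ≠ d)
    (hgf : g = Equiv.swap c d * Equiv.swap a b) :
    {s : Perm α | s.IsSwap ∧ (g * s).IsSwap} ⊆ {Equiv.swap a b, Equiv.swap c d} := by
  have ga : g a = b := by
    rw [hgf, Perm.mul_apply, Equiv.swap_apply_left, Equiv.swap_apply_of_ne_of_ne hbc hbd]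
  have gb : g b = a := by
    rw [hgf, Perm.mul_apply, Equiv.swap_apply_right, Equiv.swap_apply_of_ne_of_ne hac had]
  have gc : g c = d := by
    rw [hgf, Perm.mul_apply, Equiv.swap_apply_of_ne_of_ne hac.symm hbc.symm,
      Equiv.swap_apply_left]
  have gd : g d = c := by
    rw [hgf, Perm.mul_apply, Equiv.swap_apply_of_ne_of_ne had.symm hbd.symm,
      Equiv.swap_apply_right]
  have hg1 : g ≠ 1 := by
    intro h; rw [h] at ga; simp at ga; exact hab ga
  rintro s ⟨hs, hgs⟩
  obtain ⟨x, y, hxy, rfl⟩ := hs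
  have hmem : ∀ z, Equiv.swap x y z ≠ z → (z = a ∨ z = b ∨ z = c ∨ z = d) := by
    intro z hz
    by_contra hcon
    push_neg at hcon
    obtain ⟨h1, h2, h3, h4⟩ := hcon
    have hz2 : g z = z := by
      rw [hgf, Perm.mul_apply, Equiv.swap_apply_of_ne_of_ne h1 h2,
        Equiv.swap_apply_of_ne_of_ne h3 h4]
    exact aux_supp hg1 ⟨x, y, hxy, rfl⟩ hgs hz hz2
  have hx := hmem x (by rw [Equiv.swap_apply_left]; exact Ne.symm hxy)
  have hy := hmem y (by rw [Equiv.swap_apply_right]; exact hxy)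
  rcases hx with rfl | rfl | rfl | rfl <;> rcases hy with rfl | rfl | rfl | rfl
  · exact absurd rfl hxy
  · exact Or.inl rfl
  · exact absurd hgs (aux_excl hxy (by rw [gc]; exact had.symm) (by rw [gc]; exact hcd.symm)
      (by rw [gc, gd]))
  · exact absurd hgs (aux_excl hxy (by rw [gd]; exact hac.symm) (by rw [gd]; exact hcd)
      (by rw [gd, gc]))
  · exact Or.inl (Equiv.swap_comm _ _)
  · exact absurd rfl hxy
  · exact absurd hgs (aux_excl hxy (by rw [gc]; exact hbd.symm) (by rw [gc]; exact hcd.symm)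
      (by rw [gc, gd]))
  · exact absurd hgs (aux_excl hxy (by rw [gd]; exact hbc.symm) (by rw [gd]; exact hcd)
      (by rw [gd, gc]))
  · rw [Equiv.swap_comm] at hgs
    exact absurd hgs (aux_excl hxy.symm (by rw [gc]; exact had.symm) (by rw [gc]; exact hcd.symm)
      (by rw [gc, gd]))
  · rw [Equiv.swap_comm] at hgs
    exact absurd hgs (aux_excl hxy.symm (by rw [gc]; exact hbd.symm) (by rw [gc]; exact hcd.symm)
      (by rw [gc, gd]))
  · exact absurd rfl hxy
  · exact Or.inr rfl
  · rw [Equiv.swap_comm] at hgs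
    exact absurd hgs (aux_excl hxy.symm (by rw [gd]; exact hac.symm) (by rw [gd]; exact hcd)
      (by rw [gd, gc]))
  · rw [Equiv.swap_comm] at hgs
    exact absurd hgs (aux_excl hxy.symm (by rw [gd]; exact hbc.symm) (by rw [gd]; exact hcd)
      (by rw [gd, gc]))
  · exact Or.inr (Equiv.swap_comm _ _)
  · exact absurd rfl hxy

lemma aux_card3 {β : Type*} {T : Set β} {p q r : β} (h : T ⊆ {p, q, r}) : T.ncard ≤ 3 := by
  have hfin : ({p, q, r} : Set β).Finite :=
    ((Set.finite_singleton r).insert q).insert p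
  have h1 : T.ncard ≤ ({p, q, r} : Set β).ncard := Set.ncard_le_ncard h hfin
  have h2 : ({p, q, r} : Set β).ncard ≤ 3 := by
    have i1 := Set.ncard_insert_le p ({q, r} : Set β)
    have i2 := Set.ncard_insert_le q ({r} : Set β)
    have i3 : ({r} : Set β).ncard = 1 := Set.ncard_singleton r
    omega
  omega

lemma aux_bound [Fintype α] (g : Perm α) (hg : g ≠ 1) :
    {s : Perm α | s.IsSwap ∧ (g * s).IsSwap}.ncard ≤ 3 := by
  rcases Set.eq_empty_or_nonempty {s : Perm α | s.IsSwap ∧ (g * s).IsSwap} with h | ⟨s₀, hs₀, hgs₀⟩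
  · rw [h]; simp
  obtain ⟨a, b, hab, rfl⟩ := hs₀
  obtain ⟨c, d, hcd, hcd2⟩ := hgs₀
  have hgf : g = Equiv.swap c d * Equiv.swap a b := by
    rw [← hcd2, mul_assoc, Equiv.swap_mul_self, mul_one]
  by_cases h1 : c = a
  · rw [h1] at hgf hcd
    by_cases h2 : d = b
    · rw [h2, Equiv.swap_mul_self] at hgf; exact absurd hgf hg
    · exact aux_card3 (aux_three hcd hab h2 hgf)
  by_cases h2 : c = b
  · rw [h2] at hgf hcd
    by_cases h3 : d = a
    · rw [h3, Equiv.swap_comm b a, Equiv.swap_mul_self] at hgf; exact absurd hgf hg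
    · rw [Equiv.swap_comm a b] at hgf
      exact aux_card3 (aux_three hcd hab.symm h3 hgf)
  by_cases h3 : d = a
  · rw [h3] at hgf hcd
    rw [Equiv.swap_comm c a] at hgf
    exact aux_card3 (aux_three (fun hh => h1 hh.symm) hab h2 hgf)
  by_cases h4 : d = b
  · rw [h4] at hgf hcd
    rw [Equiv.swap_comm c b, Equiv.swap_comm a b] at hgf
    exact aux_card3 (aux_three (Ne.symm hcd) hab.symm h1 hgf)
  · apply aux_card3 (p := Equiv.swap a b) (q := Equiv.swap c d) (r := Equiv.swap c d)
    intro s hs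
    rcases aux_four hab hcd (fun hh => h1 hh.symm) (fun hh => h3 hh.symm)
      (fun hh => h2 hh.symm) (fun hh => h4 hh.symm) hgf hs with h | h
    · exact Or.inl h
    · exact Or.inr (Or.inl h)

end aux

lemma cwGen_isSwap {n : ℕ} (hn : 4 ≤ n) {s : Perm (Fin n)} (hs : s ∈ cwGen n) :
    s.IsSwap := by
  obtain ⟨i, j, rfl, hc⟩ := hs
  refine ⟨i, j, ?_, rfl⟩
  rcases hc with ⟨h1, h2⟩ | ⟨h1, h2⟩ | ⟨h1, h2⟩
  · exact Ne.symm h2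
  · intro h; rw [h] at h1; omega
  · intro h; rw [h] at h1; omega

/-- For n ≥ 4, any two distinct vertices of CW_n have at most 3 common neighbors. -/
theorem stmt11 (n : ℕ) (hn : 4 ≤ n) (u v : Equiv.Perm (Fin n)) (huv : u ≠ v) :
    ((CW n).neighborSet u ∩ (CW n).neighborSet v).ncard ≤ 3 := by
  classical
  have hg : v⁻¹ * u ≠ 1 := fun h => huv (inv_mul_eq_one.mp h).symm
  have hsub : (CW n).neighborSet u ∩ (CW n).neighborSet v ⊆
      (fun s => u * s) '' {s : Perm (Fin n) | s.IsSwap ∧ ((v⁻¹ * u) * s).IsSwap} := by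
    rintro w ⟨hu, hv⟩
    rw [SimpleGraph.mem_neighborSet] at hu hv
    obtain ⟨hu1, hu2⟩ := hu
    obtain ⟨hv1, hv2⟩ := hv
    refine ⟨u⁻¹ * w, ⟨cwGen_isSwap hn hu2, ?_⟩, by group⟩
    have h5 : (v⁻¹ * u) * (u⁻¹ * w) = v⁻¹ * w := by group
    rw [h5]
    exact cwGen_isSwap hn hv2
  calc ((CW n).neighborSet u ∩ (CW n).neighborSet v).ncard
      ≤ ((fun s => u * s) ''
          {s : Perm (Fin n) | s.IsSwap ∧ ((v⁻¹ * u) * s).IsSwap}).ncard :=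
        Set.ncard_le_ncard hsub (Set.toFinite _)
    _ ≤ ({s : Perm (Fin n) | s.IsSwap ∧ ((v⁻¹ * u) * s).IsSwap}).ncard :=
        Set.ncard_image_le (Set.toFinite _)
    _ ≤ 3 := aux_bound _ hg
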